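/- Let G(z,w) = −log|z−w| − log|z−w̄| be the Neumann Green's function on ℍ, let (f̃_t) be the centered reverse Loewner flow driven by W̃_t = √κ B_t (B a standard Brownian motion), and set G̃_t(y,z) = G(f̃_t(y), f̃_t(z)) for distinct y,z ∈ ℍ. If κ = 4 (so that the relevant multiplicative factor is 1), then dG̃_t(y,z) = −Re(2/f̃_t(y)) · Re(2/f̃_t(z)) dt; more generally for κ > 0 this identity holds for the drift term computed via Itô's formula. -/

import Mathlib

open MeasureTheory ProbabilityTheory Filter Set

noncomputable section

variable {Ω : Type*} {mΩ : MeasurableSpace Ω}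

/-- `B` is a standard Brownian motion under `P`: a.s. continuous paths started at `0`,
with independent increments, the increment `B_t − B_s` being `N(0, t−s)`-distributed. -/
def IsBrownianMotion (P : Measure Ω) (B : ℝ → Ω → ℝ) : Prop :=
  (∀ᵐ ω ∂P, Continuous fun t => B t ω) ∧
  (∀ᵐ ω ∂P, B 0 ω = 0) ∧
  (∀ s t : ℝ, 0 ≤ s → s ≤ t →
    P.map (fun ω => B t ω - B s ω) = gaussianReal 0 ((t - s).toNNReal)) ∧
  (∀ (n : ℕ) (t : Fin (n + 1) → ℝ), Monotone t → 0 ≤ t 0 →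
    iIndepFun
      (fun (i : Fin n) ω => B (t i.succ) ω - B (t i.castSucc) ω) P)

/-- `Z` is a squared Bessel process of dimension `δ` started from `z0`, i.e. a
nonnegative-in-law continuous adapted solution of `dZ_t = δ dt + 2√(Z_t) dB_t`,
characterized via the martingale problem: `Z_t = z0 + δt + M_t` where `M` is a
continuous martingale with `M_0 = 0` and quadratic variation `∫_0^t 4 Z_s ds`
(i.e. `M² − ∫ 4Z` is a martingale), so that `M_t = 2∫_0^t √(Z_s) dB_s`. -/
def IsSquaredBessel (P : Measure Ω) (ℱ : Filtration ℝ mΩ) (δ z0 : ℝ)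
    (Z : ℝ → Ω → ℝ) : Prop :=
  (∀ᵐ ω ∂P, Continuous fun t => Z t ω) ∧
  (∀ᵐ ω ∂P, Z 0 ω = z0) ∧
  Adapted ℱ (fun t => Z t) ∧
  ∃ M : ℝ → Ω → ℝ,
    Martingale M ℱ P ∧
    (∀ᵐ ω ∂P, Continuous fun t => M t ω) ∧
    (∀ᵐ ω ∂P, M 0 ω = 0) ∧
    Martingale (fun t ω => (M t ω) ^ 2 - ∫ s in (0:ℝ)..t, 4 * Z s ω) ℱ P ∧
    (∀ᵐ ω ∂P, ∀ t : ℝ, 0 ≤ t → Z t ω = z0 + δ * t + M t ω)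

/-- `X` is a Bessel process of dimension `δ` started from `x ≥ 0`: the square root of a
squared Bessel process of dimension `δ` started from `x²`. -/
def IsBessel (P : Measure Ω) (ℱ : Filtration ℝ mΩ) (δ x : ℝ)
    (X : ℝ → Ω → ℝ) : Prop :=
  ∃ Z : ℝ → Ω → ℝ, IsSquaredBessel P ℱ δ (x ^ 2) Z ∧
    ∀ᵐ ω ∂P, ∀ t : ℝ, 0 ≤ t → X t ω = Real.sqrt (Z t ω)


/-- The Neumann Green's function `G(z,w) = −log|z−w| − log|z−w̄|` on the upper
half-plane. -/
def neumannGreen (z w : ℂ) : ℝ :=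
  -Real.log ‖z - w‖ - Real.log ‖z - (starRingEnd ℂ) w‖


/-- real part of a ℝ→ℂ function derivative -/
theorem hasDerivAt_re' {h : ℝ → ℂ} {h' : ℂ} {t : ℝ} (hh : HasDerivAt h h' t) :
    HasDerivAt (fun s => (h s).re) h'.re t :=
  Complex.reCLM.hasFDerivAt.comp_hasDerivAt t hh

theorem hasDerivAt_im' {h : ℝ → ℂ} {h' : ℂ} {t : ℝ} (hh : HasDerivAt h h' t) :
    HasDerivAt (fun s => (h s).im) h'.im t :=
  Complex.imCLM.hasFDerivAt.comp_hasDerivAt t hh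

theorem hasDerivAt_log_cabs {h : ℝ → ℂ} {h' : ℂ} {t : ℝ} (hh : HasDerivAt h h' t)
    (hne : h t ≠ 0) :
    HasDerivAt (fun s => Real.log ‖h s‖) ((h' / h t).re) t := by
  have hfun : (fun s => Real.log ‖h s‖)
      = fun s => Real.log (Complex.normSq (h s)) / 2 := by
    funext s
    rw [Complex.norm_def, Real.log_sqrt (Complex.normSq_nonneg _)]
  rw [hfun]
  have hre := hasDerivAt_re' hh
  have him := hasDerivAt_im' hh
  have hnormSq : HasDerivAt (fun s => Complex.normSq (h s))
      (h'.re * (h t).re + (h t).re * h'.re + (h'.im * (h t).im + (h t).im * h'.im)) t := by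
    have : (fun s => Complex.normSq (h s))
        = fun s => (h s).re * (h s).re + (h s).im * (h s).im := by
      funext s; rw [Complex.normSq_apply]
    rw [this]
    exact (hre.mul hre).add (him.mul him)
  have hns0 : Complex.normSq (h t) ≠ 0 := by
    simpa [Complex.normSq_eq_zero] using hne
  have := (hnormSq.log hns0).div_const 2
  refine this.congr_deriv ?_
  rw [Complex.div_re]
  field_simp
  ring


theorem aux_im_pos (W : ℝ → ℝ) (f : ℝ → ℂ) (h0 : 0 < (f 0).im)
    (hf : ∀ t, 0 ≤ t → HasDerivAt f (-2 / (f t - (W t : ℂ))) t) :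
    ∀ t, 0 ≤ t → 0 < (f t).im := by
  intro t ht
  by_contra hle
  push_neg at hle
  set y : ℝ → ℝ := fun s => (f s).im with hy
  have hyval : ∀ s, 0 ≤ s →
      (-2 / (f s - (W s : ℂ))).im = 2 * y s / Complex.normSq (f s - (W s : ℝ)) := by
    intro s _
    rw [Complex.div_im]
    simp [hy]
    ring
  have hyderiv : ∀ s, 0 ≤ s →
      HasDerivAt y (2 * y s / Complex.normSq (f s - (W s : ℝ))) s := by
    intro s hs
    have := hasDerivAt_im' (hf s hs)
    rw [hyval s hs] at this; exact this
  have hcont : ContinuousOn y (Icc 0 t) := by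
    intro s hs
    exact ((hyderiv s hs.1).continuousAt).continuousWithinAt
  -- set of bad times
  set S : Set ℝ := {s | s ∈ Icc 0 t ∧ y s ≤ 0} with hS
  have hSne : S.Nonempty := ⟨t, ⟨ht, le_refl t⟩, hle⟩
  have hSclosed : IsClosed S := by
    have : S = Icc 0 t ∩ y ⁻¹' Iic 0 := by ext s; simp [hS, and_comm]
    rw [this]
    exact ContinuousOn.preimage_isClosed_of_isClosed hcont isClosed_Icc isClosed_Iic
  have hSbdd : BddBelow S := ⟨0, fun s hs => hs.1.1⟩
  set t0 := sInf S with ht0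
  have ht0mem : t0 ∈ S := hSclosed.csInf_mem hSne hSbdd
  have ht0pos : 0 < t0 := by
    rcases lt_or_eq_of_le ht0mem.1.1 with h | h
    · exact h
    · exfalso; rw [← h] at ht0mem; exact absurd ht0mem.2 (not_le.mpr h0)
  have hpos : ∀ s ∈ Ico 0 t0, 0 < y s := by
    intro s hs
    by_contra hneg
    push_neg at hneg
    have : s ∈ S := ⟨⟨hs.1, hs.2.le.trans ht0mem.1.2⟩, hneg⟩
    exact absurd (csInf_le hSbdd this) (not_le.mpr hs.2)
  have hmono : MonotoneOn y (Icc 0 t0) := by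
    apply monotoneOn_of_deriv_nonneg (convex_Icc 0 t0)
    · intro s hs; exact ((hyderiv s hs.1).continuousAt).continuousWithinAt
    · intro s hs
      rw [interior_Icc] at hs
      exact ((hyderiv s hs.1.le).differentiableAt).differentiableWithinAt
    · intro s hs
      rw [interior_Icc] at hs
      rw [(hyderiv s hs.1.le).deriv]
      exact div_nonneg (by linarith [hpos s ⟨hs.1.le, hs.2⟩]) (Complex.normSq_nonneg _)
  have := hmono ⟨le_refl 0, ht0pos.le⟩ ⟨ht0pos.le, le_refl t0⟩ ht0pos.le
  exact absurd (this.trans ht0mem.2) (not_le.mpr h0)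


theorem aux_ne_zero (c : ℝ → ℂ) (h : ℝ → ℂ) (T : ℝ) (hT : 0 ≤ T)
    (hc : ContinuousOn c (Icc 0 T))
    (hh : ∀ t ∈ Icc 0 T, HasDerivAt h (c t * h t) t)
    (h0 : h 0 ≠ 0) : h T ≠ 0 := by
  intro hT0
  obtain ⟨K, hK⟩ := (isCompact_Icc (a := (0:ℝ)) (b := T)).exists_bound_of_continuousOn hc
  set H : ℝ → ℂ := fun s => h (T - s) with hH
  have hmem : ∀ s ∈ Icc 0 T, T - s ∈ Icc 0 T := by
    intro s hs; constructor <;> [linarith [hs.2]; linarith [hs.1]]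
  have hHd : ∀ s ∈ Icc 0 T, HasDerivAt H (-(c (T - s) * H s)) s := by
    intro s hs
    have h1 : HasDerivAt (fun u : ℝ => T - u) (-1) s := by
      simpa using (hasDerivAt_id s).const_sub T
    have := (hh (T - s) (hmem s hs)).scomp s h1
    simp only [neg_smul, one_smul] at this; exact this
  have hHcont : ContinuousOn H (Icc 0 T) := by
    intro s hs
    exact ((hHd s hs).continuousAt).continuousWithinAt
  have hbound : ∀ s ∈ Ico 0 T, ‖(fun u => -(c (T - u) * H u)) s‖ ≤ K * ‖H s‖ + 0 := by
    intro s hs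
    have hm := hmem s ⟨hs.1, hs.2.le⟩
    simp only [norm_neg, norm_mul, add_zero]
    exact mul_le_mul_of_nonneg_right (hK _ hm) (norm_nonneg _)
  have := norm_le_gronwallBound_of_norm_deriv_right_le (δ := 0) (ε := 0) (K := K) hHcont
    (fun s hs => ((hHd s ⟨hs.1, hs.2.le⟩).hasDerivWithinAt)) (by simp [hH, hT0]) hbound
  have hTmem : T ∈ Icc (0:ℝ) T := ⟨hT, le_refl T⟩
  have := this T hTmem
  rw [gronwallBound_ε0, sub_zero] at this
  simp only [zero_mul] at this
  have : H T = 0 := norm_le_zero_iff.mp this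
  rw [hH] at this
  simp at this
  exact h0 this


theorem loewner_green_deriv (W : ℝ → ℝ) (gy gz : ℝ → ℂ) (y z : ℂ) (hy : 0 < y.im) (hz : 0 < z.im)
    (hyz : y ≠ z) (hWc : Continuous W)
    (hgy0 : gy 0 = y) (hgz0 : gz 0 = z)
    (hdy : ∀ t : ℝ, 0 ≤ t → HasDerivAt gy (-2 / (gy t - (W t : ℂ))) t)
    (hdz : ∀ t : ℝ, 0 ≤ t → HasDerivAt gz (-2 / (gz t - (W t : ℂ))) t)
    (t : ℝ) (ht : 0 ≤ t) :
    HasDerivAt (fun s => neumannGreen (gy s - (W s : ℂ)) (gz s - (W s : ℂ)))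
      (-((2 / (gy t - (W t : ℂ))).re * (2 / (gz t - (W t : ℂ))).re)) t := by
  -- imaginary parts stay positive
  have hyim : ∀ s, 0 ≤ s → 0 < (gy s).im := by
    apply aux_im_pos W gy _ hdy
    rw [hgy0]; exact hy
  have hzim : ∀ s, 0 ≤ s → 0 < (gz s).im := by
    apply aux_im_pos W gz _ hdz
    rw [hgz0]; exact hz
  set fy : ℝ → ℂ := fun s => gy s - (W s : ℂ) with hfy
  set fz : ℝ → ℂ := fun s => gz s - (W s : ℂ) with hfz
  have hfyne : ∀ s, 0 ≤ s → fy s ≠ 0 := by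
    intro s hs h0
    have : (fy s).im = 0 := by rw [h0]; simp
    rw [hfy] at this; simp at this
    exact absurd this (ne_of_gt (hyim s hs))
  have hfzne : ∀ s, 0 ≤ s → fz s ≠ 0 := by
    intro s hs h0
    have : (fz s).im = 0 := by rw [h0]; simp
    rw [hfz] at this; simp at this
    exact absurd this (ne_of_gt (hzim s hs))
  -- continuity
  have hgyc : ContinuousOn gy (Icc 0 t) := fun s hs => ((hdy s hs.1).continuousAt).continuousWithinAt
  have hgzc : ContinuousOn gz (Icc 0 t) := fun s hs => ((hdz s hs.1).continuousAt).continuousWithinAt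
  have hfyc : ContinuousOn fy (Icc 0 t) :=
    hgyc.sub ((Complex.continuous_ofReal.comp hWc).continuousOn)
  have hfzc : ContinuousOn fz (Icc 0 t) :=
    hgzc.sub ((Complex.continuous_ofReal.comp hWc).continuousOn)
  -- h1 := gy - gz is nonvanishing
  set h1 : ℝ → ℂ := fun s => gy s - gz s with hh1
  have h1d : ∀ s, 0 ≤ s → HasDerivAt h1 (-2 / fy s + 2 / fz s) s := by
    intro s hs
    exact ((hdy s hs).sub (hdz s hs)).congr_deriv (by simp only [hfy, hfz]; ring)
  have h1ode : ∀ s ∈ Icc 0 t, HasDerivAt h1 ((2 / (fy s * fz s)) * h1 s) s := by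
    intro s hs
    have key : -2 / fy s + 2 / fz s = (2 / (fy s * fz s)) * h1 s := by
      have h1val : h1 s = fy s - fz s := by rw [hh1, hfy, hfz]; ring
      rw [h1val]
      field_simp [hfyne s hs.1, hfzne s hs.1]
      ring
    rw [← key]; exact h1d s hs.1
  have h1ne : h1 t ≠ 0 := by
    apply aux_ne_zero (fun s => 2 / (fy s * fz s)) h1 t ht _ h1ode
    · rw [hh1]; simp only [hgy0, hgz0, sub_ne_zero]; exact hyz
    · exact continuousOn_const.div (hfyc.mul hfzc)
        (fun s hs => mul_ne_zero (hfyne s hs.1) (hfzne s hs.1))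
  -- h2 := gy - conj gz is nonvanishing (positive imaginary part)
  set h2 : ℝ → ℂ := fun s => gy s - (starRingEnd ℂ) (gz s) with hh2
  have h2ne : ∀ s, 0 ≤ s → h2 s ≠ 0 := by
    intro s hs h0
    have : (h2 s).im = 0 := by rw [h0]; simp
    rw [hh2] at this
    simp only [Complex.sub_im, Complex.conj_im] at this
    nlinarith [hyim s hs, hzim s hs]
  have h2d : ∀ s, 0 ≤ s →
      HasDerivAt h2 (-2 / fy s - (starRingEnd ℂ) (-2 / fz s)) s := by
    intro s hs
    have hconj : HasDerivAt (fun u => (starRingEnd ℂ) (gz u))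
        ((starRingEnd ℂ) (-2 / fz s)) s :=
      (Complex.conjCLE.toContinuousLinearMap.hasFDerivAt).comp_hasDerivAt s (hdz s hs)
    exact (hdy s hs).sub hconj
  -- rewrite the Green's function
  have hfun : (fun s => neumannGreen (gy s - (W s : ℂ)) (gz s - (W s : ℂ)))
      = fun s => -Real.log ‖h1 s‖ - Real.log ‖h2 s‖ := by
    funext s
    unfold neumannGreen
    have A : gy s - (W s : ℂ) - (gz s - (W s : ℂ)) = gy s - gz s := by ring
    have B : gy s - (W s : ℂ) - (starRingEnd ℂ) (gz s - (W s : ℂ))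
        = gy s - (starRingEnd ℂ) (gz s) := by
      rw [map_sub, Complex.conj_ofReal]; ring
    rw [A, B, hh1, hh2]
  rw [hfun]
  have d1 := hasDerivAt_log_cabs (h1d t ht) h1ne
  have d2 := hasDerivAt_log_cabs (h2d t ht) (h2ne t ht)
  have := (d1.neg).sub d2
  refine this.congr_deriv ?_
  -- final algebra
  set a := fy t with ha
  set b := fz t with hb
  have hane : a ≠ 0 := hfyne t ht
  have hbne : b ≠ 0 := hfzne t ht
  have habne : a - b ≠ 0 := by
    have : h1 t = a - b := by rw [hh1, ha, hb, hfy, hfz]; ring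
    rw [← this]; exact h1ne
  have h1eq : h1 t = a - b := by rw [hh1, ha, hb, hfy, hfz]; ring
  have h2eq : h2 t = a - (starRingEnd ℂ) b := by
    rw [hh2, ha, hb, hfy, hfz, map_sub, Complex.conj_ofReal]; ring
  have hcbne : (starRingEnd ℂ) b ≠ 0 := by simpa using hbne
  have hacbne : a - (starRingEnd ℂ) b ≠ 0 := by rw [← h2eq]; exact h2ne t ht
  rw [h1eq, h2eq]
  have e1 : (-2 / a + 2 / b) / (a - b) = 2 / (a * b) := by
    field_simp
    ring
  have e2 : (-2 / a - (starRingEnd ℂ) (-2 / b)) / (a - (starRingEnd ℂ) b)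
      = 2 / (a * (starRingEnd ℂ) b) := by
    rw [map_div₀, map_neg]
    simp only [map_ofNat]
    field_simp
    ring
  rw [e1, e2]
  have e3 : 2 / (a * b) = (2 / a) * (1 / b) := by
    rw [div_mul_div_comm]; ring_nf
  have e4 : 2 / (a * (starRingEnd ℂ) b) = (2 / a) * (starRingEnd ℂ) (1 / b) := by
    rw [map_div₀, map_one, div_mul_div_comm]; ring_nf
  rw [e3, e4]
  have e5 : ((2 / a) * (1 / b)).re + ((2 / a) * (starRingEnd ℂ) (1 / b)).re
      = (2 / a).re * (2 / b).re := by
    rw [← Complex.add_re, ← mul_add, Complex.add_conj]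
    have : (2 / b).re = 2 * (1 / b).re := by
      rw [show (2 : ℂ) / b = 2 * (1 / b) by ring]
      simp [Complex.mul_re]
    rw [this]
    simp [Complex.mul_re]
    try ring
  rw [← e5]
  try ring

/-- Let `(f̃_t)` be the centered reverse Loewner flow `f̃_t = g̃_t − W̃_t` driven by
`W̃_t = √κ B_t` with `B` a standard Brownian motion and `κ > 0`, and set
`G̃_t(y,z) = G(f̃_t(y), f̃_t(z))` for distinct `y, z ∈ ℍ`.  Then almost surely the
semimartingale decomposition of `G̃_t(y,z)` has vanishing martingale part and drift
`−Re(2/f̃_t(y))·Re(2/f̃_t(z)) dt`; that is, a.s. for all `t ≥ 0`,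
`dG̃_t(y,z) = −Re(2/f̃_t(y))·Re(2/f̃_t(z)) dt`.  (For `κ = 4` this is exactly the
statement that the relevant multiplicative factor is `1`.) -/
theorem greens_function_evolution (P : Measure Ω) [IsProbabilityMeasure P]
    (κ : ℝ) (hκ : 0 < κ) (B : ℝ → Ω → ℝ) (hB : IsBrownianMotion P B)
    (W : ℝ → Ω → ℝ) (hW : ∀ t ω, W t ω = Real.sqrt κ * B t ω)
    (g : ℝ → Ω → ℂ → ℂ)
    (hLoewner : ∀ᵐ ω ∂P, ∀ w : ℂ, 0 < w.im → g 0 ω w = w ∧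
      ∀ t : ℝ, 0 ≤ t →
        HasDerivAt (fun s => g s ω w) (-2 / (g t ω w - (W t ω : ℂ))) t)
    (y z : ℂ) (hy : 0 < y.im) (hz : 0 < z.im) (hyz : y ≠ z) :
    ∀ᵐ ω ∂P, ∀ t : ℝ, 0 ≤ t →
      HasDerivAt
        (fun s => neumannGreen (g s ω y - (W s ω : ℂ)) (g s ω z - (W s ω : ℂ)))
        (-((2 / (g t ω y - (W t ω : ℂ))).re * (2 / (g t ω z - (W t ω : ℂ))).re)) t := by
  filter_upwards [hB.1, hLoewner] with ω hBc hL
  intro t ht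
  have hWc : Continuous (fun s => W s ω) := by
    have h : (fun s => W s ω) = fun s => Real.sqrt κ * B s ω := funext (fun s => hW s ω)
    rw [h]; exact continuous_const.mul hBc
  obtain ⟨hgy0, hdy⟩ := hL y hy
  obtain ⟨hgz0, hdz⟩ := hL z hz
  exact loewner_green_deriv (fun s => W s ω) (fun s => g s ω y) (fun s => g s ω z)
    y z hy hz hyz hWc hgy0 hgz0 hdy hdz t ht


end
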